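/- Under the standing comparison assumptions for two solutions of the slow-down system on [0,T] with T₁ = T/2, setting β = (1−μ)/2^{α+2}, one has for all T₁ ≤ t ≤ b ≤ T: Δs₂(t) ≤ (Δs₂(T₁)/s₁(T₁))·s₁(t)·((1 + 2^α·C₀·s₁(b)^{2α}·(b−t)) / (1 + 2^α·C₀·s₁(b)^{2α}·(b−T₁)))^{β}. -/

import Mathlib

open Set Filter Topology

set_option maxHeartbeats 2000000

/-- Barrier lemma: if `f a ≤ k` and `f' t < 0` whenever `f t ≥ k`, then `f ≤ k` on `[a,c]`. -/
lemma my_barrier {f f' : ℝ → ℝ} {a c k : ℝ}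
    (hderiv : ∀ t ∈ Set.Icc a c, HasDerivAt f (f' t) t)
    (hfa : f a ≤ k)
    (hk : ∀ t ∈ Set.Icc a c, k ≤ f t → f' t < 0) :
    ∀ t ∈ Set.Icc a c, f t ≤ k := by
  by_contra hcon
  push_neg at hcon
  obtain ⟨τ, hτ, hfτ⟩ := hcon
  have hcont : ContinuousOn f (Set.Icc a c) := fun x hx =>
    ((hderiv x hx).continuousAt).continuousWithinAt
  have haτ : a ≤ τ := hτ.1
  set S : Set ℝ := {x | x ∈ Set.Icc a τ ∧ f x ≤ k} with hSdef
  have hSsub : S ⊆ Set.Icc a τ := fun x hx => hx.1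
  have hSsub' : S ⊆ Set.Icc a c := fun x hx => ⟨hx.1.1, hx.1.2.trans hτ.2⟩
  have hSne : S.Nonempty := ⟨a, ⟨le_refl a, haτ⟩, hfa⟩
  have hScl : IsClosed S := by
    have : S = Set.Icc a τ ∩ f ⁻¹' (Set.Iic k) := by
      ext x; simp only [hSdef, Set.mem_setOf_eq, Set.mem_inter_iff, Set.mem_preimage,
        Set.mem_Iic]
    rw [this]
    exact (hcont.mono (fun x hx => ⟨hx.1, hx.2.trans hτ.2⟩)).preimage_isClosed_of_isClosed
      isClosed_Icc isClosed_Iic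
  have hScomp : IsCompact S := isCompact_Icc.of_isClosed_subset hScl hSsub
  set t₀ := sSup S with ht₀def
  have ht₀S : t₀ ∈ S := hScomp.sSup_mem hSne
  have ht₀c : t₀ ∈ Set.Icc a c := hSsub' ht₀S
  have ht₀τ : t₀ < τ := by
    rcases lt_or_eq_of_le (hSsub ht₀S).2 with h | h
    · exact h
    · exact absurd (h ▸ ht₀S.2) (not_le.mpr hfτ)
  have hgt : ∀ x, t₀ < x → x ≤ τ → k < f x := by
    intro x hx hxτ
    by_contra hle
    push_neg at hle
    have : x ∈ S := ⟨⟨(hSsub ht₀S).1.trans hx.le, hxτ⟩, hle⟩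
    exact absurd (le_csSup hScomp.bddAbove this) (not_le.mpr hx)
  have hge : k ≤ f t₀ := by
    by_contra hlt
    push_neg at hlt
    have hca : ContinuousAt f t₀ := (hderiv t₀ ht₀c).continuousAt
    have hev : ∀ᶠ x in 𝓝[>] t₀, f x < k :=
      (hca.eventually_lt continuousAt_const hlt).filter_mono nhdsWithin_le_nhds
    have hmem : Set.Ioo t₀ τ ∈ 𝓝[>] t₀ := Ioo_mem_nhdsGT_of_mem ⟨le_refl _, ht₀τ⟩
    obtain ⟨x, hx1, hx2⟩ := (hev.and (eventually_mem_nhdsWithin.and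
      (Filter.eventually_of_mem hmem (fun x hx => hx)))).exists
    exact absurd hx1 (not_lt.mpr (hgt x hx2.2.1 hx2.2.2.le).le)
  have hf' : f' t₀ < 0 := hk t₀ ht₀c hge
  have hslope : Tendsto (slope f t₀) (𝓝[>] t₀) (𝓝 (f' t₀)) :=
    ((hasDerivAt_iff_tendsto_slope.1 (hderiv t₀ ht₀c)).mono_left
      (nhdsWithin_mono _ (fun x hx => ne_of_gt hx)))
  have hev : ∀ᶠ x in 𝓝[>] t₀, slope f t₀ x < 0 := hslope.eventually_lt_const hf'
  have hmem : Set.Ioo t₀ τ ∈ 𝓝[>] t₀ := Ioo_mem_nhdsGT_of_mem ⟨le_refl _, ht₀τ⟩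
  obtain ⟨x, hx1, hx2⟩ := (hev.and (Filter.eventually_of_mem hmem (fun x hx => hx))).exists
  have hxpos : 0 < x - t₀ := sub_pos.mpr hx2.1
  have hfx : f x - f t₀ < 0 := by
    have h3 : f x - f t₀ = slope f t₀ x * (x - t₀) := by
      rw [slope_def_field]; field_simp
    rw [h3]
    exact mul_neg_of_neg_of_pos hx1 hxpos
  have : f x < k := by linarith [ht₀S.2]
  exact absurd this (not_lt.mpr (hgt x hx2.1 hx2.2.le).le)

/-- tangent line bound for concave rpow: for `0 < y ≤ x`, `0 ≤ α ≤ 1`: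
`y (x^α - y^α) ≤ α y^α (x-y)`. -/
lemma my_rpow_tangent {x y α : ℝ} (hy : 0 < y) (hxy : y ≤ x) (hα0 : 0 ≤ α) (hα1 : α ≤ 1) :
    y * (x ^ α - y ^ α) ≤ α * y ^ α * (x - y) := by
  have hx : 0 < x := hy.trans_le hxy
  have hs : (-1 : ℝ) ≤ x / y - 1 := by
    have : 0 < x / y := div_pos hx hy
    linarith
  have key := rpow_one_add_le_one_add_mul_self hs hα0 hα1
  have heq : (1:ℝ) + (x / y - 1) = x / y := by ring
  rw [heq] at key
  have hxy' : (x / y) ^ α = x ^ α / y ^ α := Real.div_rpow hx.le hy.le α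
  rw [hxy'] at key
  have hyα : 0 < y ^ α := Real.rpow_pos_of_pos hy α
  have h1 : x ^ α ≤ y ^ α * (1 + α * (x / y - 1)) := by
    rw [div_le_iff₀ hyα] at key
    linarith [key]
  have h2 : y * (x ^ α - y ^ α) ≤ y * (y ^ α * (α * (x / y - 1))) := by
    have : x ^ α - y ^ α ≤ y ^ α * (α * (x / y - 1)) := by nlinarith [h1]
    exact mul_le_mul_of_nonneg_left this hy.le
  calc y * (x ^ α - y ^ α) ≤ y * (y ^ α * (α * (x / y - 1))) := h2
    _ = α * y ^ α * (x - y) := by field_simp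


/-- quadratic core of the barrier argument -/
lemma my_quad_core (a1 a2 b1 b2 ρ μ : ℝ)
    (ha1 : 0 < a1) (ha2 : 0 < a2) (hb1 : 0 < b1) (hb2 : 0 < b2)
    (hμ0 : 0 < μ) (hμ1 : μ < 1)
    (hρpos : 0 < ρ) (hρle : ρ ≤ 1 + (1 - μ^2)/60)
    (hprod : b1 * b2 = ρ * (a1 * a2))
    (hΔ : 0 < b2 - a2)
    (hc1 : a1 - b1 ≤ μ * (b2 - a2))
    (hge : (17/16) * a2 ≤ b2) :
    a1^2 + a2^2 < b1^2 + b2^2 := by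
  have h1μ2 : 0 < 1 - μ^2 := by nlinarith
  have hρ61 : ρ ≤ 61/60 := by nlinarith
  have hρa2 : ρ * a2 < b2 := by nlinarith
  have hC1 : a1 * (b2 - ρ * a2) ≤ μ * ((b2 - a2) * b2) := by
    have hh : (a1 - b1) * b2 ≤ (μ * (b2 - a2)) * b2 :=
      mul_le_mul_of_nonneg_right hc1 hb2.le
    nlinarith [hprod, hh]
  have hC2 : (a1 * (b2 - ρ * a2))^2 ≤ (μ * ((b2 - a2) * b2))^2 := by
    apply pow_le_pow_left₀ (by nlinarith) hC1 2
  have hq : (1/30)*(a2 * b2) + (61/60)*a2^2 < b2^2 := by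
    nlinarith [mul_nonneg (by linarith : (0:ℝ) ≤ b2 - (17/16)*a2) ha2.le,
      sq_nonneg (b2 - (17/16)*a2)]
  have hA : (ρ - 1)*(1 + μ^2) ≤ (1 - μ^2)*(1/30) := by
    have h60 : ρ - 1 ≤ (1 - μ^2)/60 := by linarith
    nlinarith [mul_le_mul_of_nonneg_right h60 (by positivity : (0:ℝ) ≤ 1 + μ^2)]
  have hE : μ^2*((b2 - a2)*(b2 + ρ*a2)) < (b2 + a2)*(b2 - ρ*a2) := by
    nlinarith [mul_le_mul_of_nonneg_right hA (mul_pos ha2 hb2).le,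
      mul_lt_mul_of_pos_left hq h1μ2,
      mul_le_mul_of_nonneg_right hρ61 (mul_pos h1μ2 (mul_pos ha2 ha2)).le]
  have hM : a1^2*(b2^2 - ρ^2*a2^2)*(b2 - ρ*a2) < b2^2*(b2^2 - a2^2)*(b2 - ρ*a2) := by
    have M1 := mul_le_mul_of_nonneg_right hC2 (by positivity : (0:ℝ) ≤ b2 + ρ*a2)
    have M2 := mul_lt_mul_of_pos_right hE (by positivity : (0:ℝ) < (b2 - a2)*b2^2)
    linarith [M1, M2]
  have hG : a1^2*(b2^2 - ρ^2*a2^2) < b2^2*(b2^2 - a2^2) :=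
    lt_of_mul_lt_mul_right (by nlinarith [hM]) (by linarith : (0:ℝ) ≤ b2 - ρ*a2)
  have hsq : (b1*b2)^2 = (ρ*(a1*a2))^2 := by rw [hprod]
  have hfin : (a1^2 + a2^2)*b2^2 < (b1^2 + b2^2)*b2^2 := by nlinarith [hG, hsq]
  exact lt_of_mul_lt_mul_right hfin (by positivity)

/-- bound on the conserved ratio -/
lemma my_rho_bound (σ D u1 u2 μ : ℝ)
    (hσ : 0 < σ) (hD : 0 < D) (hu2p : 0 < u2) (hu2e : u2 = σ + D)
    (hμ0 : 0 < μ) (hμ1 : μ < 1)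
    (hDle : D ≤ σ * ((1 - μ)/72)) (hu1e : u1 ≤ σ + μ * D) :
    u1 * u2 ≤ (1 + (1 - μ^2)/60) * (σ * σ) := by
  subst hu2e
  have k1 : u1 * (σ + D) ≤ (σ + μ*D) * (σ + D) := by
    apply mul_le_mul_of_nonneg_right hu1e (by linarith)
  have k2 : (1+μ)*σ*D ≤ (1+μ)*σ*(σ*((1-μ)/72)) :=
    mul_le_mul_of_nonneg_left hDle (by positivity)
  have k3 : D*D ≤ (σ*((1-μ)/72))*(σ*((1-μ)/72)) :=
    mul_le_mul hDle hDle hD.le (by nlinarith)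
  nlinarith [k1, k2, k3, mul_pos hσ hσ, mul_pos hμ0 (mul_pos hσ hσ), sq_nonneg (1-μ),
    mul_nonneg (mul_nonneg hμ0.le (sub_nonneg.mpr hμ1.le)) (mul_pos hσ hσ).le]

/-- pointwise estimate (IV) -/
lemma my_iv (a1 a2 b1 b2 μ α : ℝ)
    (ha1 : 0 < a1) (ha2 : 0 < a2) (hb1 : 0 < b1) (hb2 : 0 < b2)
    (hμ0 : 0 < μ) (hμ1 : μ < 1) (hα0 : 0 < α) (hα1 : α < 1)
    (ha21 : a2 ≤ a1) (hΔ : 0 < b2 - a2) (hb2le : b2 ≤ (17/16) * a2)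
    (hc : |b1 - a1| ≤ μ * (b2 - a2)) :
    b2 * ((a1^2 + a2^2) ^ α - (b1^2 + b2^2) ^ α) ≤
      (3/2) * ((a1^2 + a2^2) ^ α) * (b2 - a2) := by
  rw [abs_le] at hc
  have hRs : (0:ℝ) < a1^2 + a2^2 := by positivity
  have hRu : (0:ℝ) < b1^2 + b2^2 := by positivity
  have hXpos : (0:ℝ) < (a1^2+a2^2)^α := Real.rpow_pos_of_pos hRs α
  have hYpos : (0:ℝ) < (b1^2+b2^2)^α := Real.rpow_pos_of_pos hRu α
  have hDa2 : b2 - a2 ≤ (1/16)*a2 := by linarith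
  have hb1low : (15/16)*a1 ≤ b1 := by nlinarith [hc.1]
  rcases le_or_gt (a1^2+a2^2) (b1^2+b2^2) with hcase | hcase
  · have hXY : (a1^2+a2^2)^α ≤ (b1^2+b2^2)^α := Real.rpow_le_rpow hRs.le hcase hα0.le
    have h0 : b2 * ((a1^2+a2^2)^α - (b1^2+b2^2)^α) ≤ 0 :=
      mul_nonpos_iff.mpr (Or.inl ⟨hb2.le, by linarith⟩)
    nlinarith [h0, mul_pos hXpos hΔ]
  · set X := (a1^2+a2^2)^α with hX
    set Y := (b1^2+b2^2)^α with hY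
    have T1 : (b1^2+b2^2) * (X - Y) ≤ α * Y * ((a1^2+a2^2) - (b1^2+b2^2)) :=
      my_rpow_tangent hRu hcase.le hα0.le hα1.le
    have T2 : (a1^2+a2^2) - (b1^2+b2^2) ≤ μ * (b2 - a2) * (a1 + b1) := by
      nlinarith [mul_le_mul_of_nonneg_right hc.1 (by positivity : (0:ℝ) ≤ a1 + b1)]
    have T3 : 2*b1*b2 ≤ b1^2 + b2^2 := by nlinarith [sq_nonneg (b1 - b2)]
    have T4 : Y ≤ X := Real.rpow_le_rpow hRu.le hcase.le hα0.le
    have P1 : b2 * ((b1^2+b2^2) * (X - Y)) ≤ b2 * (α * Y * ((a1^2+a2^2) - (b1^2+b2^2))) :=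
      mul_le_mul_of_nonneg_left T1 hb2.le
    have P2 : α * Y * ((a1^2+a2^2) - (b1^2+b2^2)) ≤ α * Y * (μ * (b2-a2) * (a1+b1)) :=
      mul_le_mul_of_nonneg_left T2 (by positivity)
    have P3 : a1 + b1 ≤ (31/15) * b1 := by nlinarith [hb1low]
    have Q1 : b2 * ((b1^2+b2^2) * (X - Y)) ≤ α * μ * (Y * (b2 * (a1+b1))) * (b2-a2) := by
      linarith [P1, mul_le_mul_of_nonneg_left P2 hb2.le]
    have Q2 : Y * (b2 * (a1+b1)) ≤ X * (b2 * ((31/15)*b1)) := by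
      apply mul_le_mul T4 (mul_le_mul_of_nonneg_left P3 hb2.le) (by positivity) hXpos.le
    have Q3 : α * μ * (Y * (b2 * (a1+b1))) * (b2-a2)
        ≤ α * μ * (X * (b2*((31/15)*b1))) * (b2-a2) := by
      apply mul_le_mul_of_nonneg_right (mul_le_mul_of_nonneg_left Q2 (by positivity)) hΔ.le
    have Q4 : α * μ * (X * (b2*((31/15)*b1))) * (b2-a2)
        ≤ (3/2) * X * (b2-a2) * (2*b1*b2) := by
      have hαμ : α * μ * (31/15) ≤ 3 := by nlinarith
      linarith [mul_le_mul_of_nonneg_right (mul_le_mul_of_nonneg_right hαμ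
          (mul_pos hXpos (mul_pos hb1 hb2)).le) hΔ.le]
    have Q5 : (3/2) * X * (b2-a2) * (2*b1*b2) ≤ (3/2) * X * (b2-a2) * (b1^2+b2^2) :=
      mul_le_mul_of_nonneg_left T3 (by positivity)
    have final : b2 * (X - Y) * (b1^2+b2^2) ≤ (3/2) * X * (b2-a2) * (b1^2+b2^2) := by
      linarith [Q1, Q3, Q4, Q5]
    exact le_of_mul_le_mul_right (by linarith [final]) hRu


lemma my_fbn (fx fb c w : ℝ) (hfx : 0 < fx) (hfb : 0 < fb)
    (hineq : fx⁻¹ ≤ fb⁻¹ + c * w) :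
    fb ≤ fx * (1 + c * fb * w) := by
  have step := mul_le_mul_of_nonneg_right hineq (le_of_lt (mul_pos hfx hfb))
  have e1 : (fx)⁻¹ * (fx*fb) = fb := by field_simp
  have e2 : ((fb)⁻¹ + c*w)*(fx*fb) = fx + c*w*(fx*fb) := by field_simp
  rw [e1, e2] at step
  nlinarith [step]

theorem spread_in_slowdown_second
    (lam α : ℝ) (hlam : 1 < lam) (hα : α ∈ Set.Ioo (0 : ℝ) 1)
    (p : ℤ) (hp : 3 ≤ p)
    (L C₀ : ℝ)
    (hL : L = Real.log lam * ((p : ℝ) / 2) ^ (2 * α))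
    (hC₀ : C₀ = 2 * α * L)
    (T μ : ℝ) (hT : 0 < T) (hμ : μ ∈ Set.Ioo (0 : ℝ) 1)
    (s₁ s₂ u₁ u₂ : ℝ → ℝ)
    (hs₁ : ∀ t ∈ Set.Icc (0 : ℝ) T,
      HasDerivAt s₁ (L * s₁ t * (s₁ t ^ 2 + s₂ t ^ 2) ^ α) t)
    (hs₂ : ∀ t ∈ Set.Icc (0 : ℝ) T,
      HasDerivAt s₂ (-(L * s₂ t * (s₁ t ^ 2 + s₂ t ^ 2) ^ α)) t)
    (hu₁ : ∀ t ∈ Set.Icc (0 : ℝ) T,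
      HasDerivAt u₁ (L * u₁ t * (u₁ t ^ 2 + u₂ t ^ 2) ^ α) t)
    (hu₂ : ∀ t ∈ Set.Icc (0 : ℝ) T,
      HasDerivAt u₂ (-(L * u₂ t * (u₁ t ^ 2 + u₂ t ^ 2) ^ α)) t)
    (hpos : ∀ t ∈ Set.Icc (0 : ℝ) T,
      0 < s₁ t ∧ 0 < s₂ t ∧ 0 < u₁ t ∧ 0 < u₂ t)
    (horder₁ : ∀ t ∈ Set.Icc (0 : ℝ) (T / 2), s₁ t ≤ s₂ t)
    (horder₂ : ∀ t ∈ Set.Icc (T / 2) T, s₂ t ≤ s₁ t)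
    (hΔpos : ∀ t ∈ Set.Icc (0 : ℝ) T, 0 < u₂ t - s₂ t)
    (hΔctrl : ∀ t ∈ Set.Icc (0 : ℝ) T, |u₁ t - s₁ t| ≤ μ * (u₂ t - s₂ t))
    (hinit : (u₂ 0 - s₂ 0) / s₂ 0 ≤ (1 - μ) / 72)
    (t b : ℝ) (ht₁ : T / 2 ≤ t) (htb : t ≤ b) (hbT : b ≤ T) :
    u₂ t - s₂ t ≤ ((u₂ (T / 2) - s₂ (T / 2)) / s₁ (T / 2)) * s₁ t *
      ((1 + 2 ^ α * C₀ * s₁ b ^ (2 * α) * (b - t)) /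
        (1 + 2 ^ α * C₀ * s₁ b ^ (2 * α) * (b - T / 2))) ^ ((1 - μ) / 2 ^ (α + 2)) := by
  obtain ⟨hα0, hα1⟩ := hα
  obtain ⟨hμ0, hμ1⟩ := hμ
  have hT₁0 : (0:ℝ) ≤ T / 2 := by linarith
  have hT₁T : T / 2 ≤ T := by linarith
  have hT₁b : T / 2 ≤ b := le_trans ht₁ htb
  have htIcc : t ∈ Set.Icc (0:ℝ) T := ⟨le_trans hT₁0 ht₁, le_trans htb hbT⟩
  have hbIcc : b ∈ Set.Icc (0:ℝ) T := ⟨le_trans hT₁0 hT₁b, hbT⟩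
  have hT₁Icc : T / 2 ∈ Set.Icc (0:ℝ) T := ⟨hT₁0, hT₁T⟩
  have hLpos : 0 < L := by
    rw [hL]
    apply mul_pos (Real.log_pos hlam)
    apply Real.rpow_pos_of_pos
    have : (3:ℝ) ≤ (p:ℝ) := by exact_mod_cast hp
    linarith
  have hC₀pos : 0 < C₀ := by rw [hC₀]; positivity
  have h2αpos : (0:ℝ) < 2^α := Real.rpow_pos_of_pos (by norm_num) α
  have hs₁p : ∀ τ ∈ Set.Icc (0:ℝ) T, 0 < s₁ τ := fun τ h => (hpos τ h).1
  have hs₂p : ∀ τ ∈ Set.Icc (0:ℝ) T, 0 < s₂ τ := fun τ h => (hpos τ h).2.1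
  have hu₁p : ∀ τ ∈ Set.Icc (0:ℝ) T, 0 < u₁ τ := fun τ h => (hpos τ h).2.2.1
  have hu₂p : ∀ τ ∈ Set.Icc (0:ℝ) T, 0 < u₂ τ := fun τ h => (hpos τ h).2.2.2
  have hRsp : ∀ τ ∈ Set.Icc (0:ℝ) T, 0 < s₁ τ ^ 2 + s₂ τ ^ 2 := by
    intro τ h; have := hs₁p τ h; positivity
  have hRup : ∀ τ ∈ Set.Icc (0:ℝ) T, 0 < u₁ τ ^ 2 + u₂ τ ^ 2 := by
    intro τ h; have := hu₁p τ h; positivity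
  have hpow2 : ∀ y : ℝ, 0 ≤ y → (y ^ 2) ^ α = y ^ (2 * α) := by
    intro y hy
    rw [← Real.rpow_natCast y 2, ← Real.rpow_mul hy]
    norm_num
  have hs12T₁ : s₁ (T/2) = s₂ (T/2) :=
    le_antisymm (horder₁ (T/2) ⟨hT₁0, le_refl _⟩) (horder₂ (T/2) ⟨le_refl _, hT₁T⟩)
  -- derivative of the ratio u₂ / s₂
  have hr' : ∀ τ ∈ Set.Icc (0:ℝ) T, HasDerivAt (fun y => u₂ y / s₂ y)
      (L * (u₂ τ / s₂ τ) * ((s₁ τ ^ 2 + s₂ τ ^ 2) ^ α - (u₁ τ ^ 2 + u₂ τ ^ 2) ^ α)) τ := by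
    intro τ hτ
    have h : HasDerivAt (fun y => u₂ y / s₂ y) _ τ := (hu₂ τ hτ).div (hs₂ τ hτ) (ne_of_gt (hs₂p τ hτ))
    convert h using 1
    have h2 : s₂ τ ≠ 0 := ne_of_gt (hs₂p τ hτ)
    field_simp
    ring
  -- Rs ≤ Ru on [0, T/2]
  have hRsRu : ∀ x ∈ Set.Icc (0:ℝ) (T/2), s₁ x ^ 2 + s₂ x ^ 2 ≤ u₁ x ^ 2 + u₂ x ^ 2 := by
    intro x hx
    have hx' : x ∈ Set.Icc (0:ℝ) T := ⟨hx.1, le_trans hx.2 hT₁T⟩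
    obtain ⟨ha1, ha2, hb1, hb2⟩ := hpos x hx'
    have h12 := horder₁ x hx
    have hΔ := hΔpos x hx'
    have hc := hΔctrl x hx'
    rw [abs_le] at hc
    obtain ⟨hc1, hc2⟩ := hc
    have key : (s₁ x - u₁ x) * (s₁ x + u₁ x) ≤ (μ*(u₂ x - s₂ x)) * (s₁ x + u₁ x) := by
      apply mul_le_mul_of_nonneg_right _ (by linarith)
      linarith
    have key2 : (μ*(u₂ x - s₂ x)) * (s₁ x + u₁ x) ≤ (μ*(u₂ x - s₂ x)) * (s₂ x + u₂ x) := by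
      apply mul_le_mul_of_nonneg_left _ (by positivity)
      nlinarith [mul_lt_mul_of_pos_right hμ1 hΔ]
    have key3 : (μ*(u₂ x - s₂ x)) * (s₂ x + u₂ x) ≤ (u₂ x - s₂ x) * (s₂ x + u₂ x) := by
      apply mul_le_mul_of_nonneg_right _ (by positivity)
      nlinarith
    nlinarith [key, key2, key3]
  -- the ratio is antitone on [0, T/2]
  have hr_anti : AntitoneOn (fun y => u₂ y / s₂ y) (Set.Icc 0 (T/2)) := by
    apply antitoneOn_of_deriv_nonpos (convex_Icc _ _)
    · intro x hx
      exact ((hr' x ⟨hx.1, le_trans hx.2 hT₁T⟩).continuousAt).continuousWithinAt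
    · intro x hx
      rw [interior_Icc] at hx
      exact ((hr' x ⟨hx.1.le, le_trans hx.2.le hT₁T⟩).differentiableAt).differentiableWithinAt
    · intro x hx
      rw [interior_Icc] at hx
      have hx'' : x ∈ Set.Icc (0:ℝ) (T/2) := ⟨hx.1.le, hx.2.le⟩
      have hx' : x ∈ Set.Icc (0:ℝ) T := ⟨hx.1.le, le_trans hx.2.le hT₁T⟩
      rw [(hr' x hx').deriv]
      have h1 : (s₁ x ^2 + s₂ x^2)^α ≤ (u₁ x^2+u₂ x^2)^α :=
        Real.rpow_le_rpow (le_of_lt (hRsp x hx')) (hRsRu x hx'') hα0.le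
      have h2 : 0 < L * (u₂ x / s₂ x) :=
        mul_pos hLpos (div_pos (hu₂p x hx') (hs₂p x hx'))
      exact mul_nonpos_iff.mpr (Or.inl ⟨h2.le, by linarith⟩)
  have hrT₁ : u₂ (T/2) / s₂ (T/2) ≤ 1 + (1 - μ) / 72 := by
    have h0Icc : (0:ℝ) ∈ Set.Icc (0:ℝ) T := ⟨le_refl _, hT.le⟩
    have hs0 := hs₂p 0 h0Icc
    have h0 : u₂ 0 / s₂ 0 ≤ 1 + (1-μ)/72 := by
      rw [div_le_iff₀ hs0]
      rw [div_le_iff₀ hs0] at hinit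
      linarith
    have := hr_anti (Set.left_mem_Icc.mpr hT₁0) (Set.right_mem_Icc.mpr hT₁0) hT₁0
    exact le_trans this h0
  -- conservation laws on [T/2, T]
  have hconsts : ∀ x ∈ Set.Icc (T/2) T, s₁ x * s₂ x = s₁ (T/2) * s₂ (T/2) := by
    apply constant_of_has_deriv_right_zero
    · intro x hx
      have hx' : x ∈ Set.Icc (0:ℝ) T := ⟨le_trans hT₁0 hx.1, hx.2⟩
      exact (((hs₁ x hx').mul (hs₂ x hx')).continuousAt).continuousWithinAt
    · intro x hx
      have hx' : x ∈ Set.Icc (0:ℝ) T := ⟨le_trans hT₁0 hx.1, hx.2.le⟩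
      have h := (hs₁ x hx').mul (hs₂ x hx')
      have heq : L * s₁ x * (s₁ x^2+s₂ x^2)^α * s₂ x
          + s₁ x * -(L * s₂ x * (s₁ x^2+s₂ x^2)^α) = 0 := by ring
      rw [heq] at h
      exact h.hasDerivWithinAt
  have hconstu : ∀ x ∈ Set.Icc (T/2) T, u₁ x * u₂ x = u₁ (T/2) * u₂ (T/2) := by
    apply constant_of_has_deriv_right_zero
    · intro x hx
      have hx' : x ∈ Set.Icc (0:ℝ) T := ⟨le_trans hT₁0 hx.1, hx.2⟩
      exact (((hu₁ x hx').mul (hu₂ x hx')).continuousAt).continuousWithinAt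
    · intro x hx
      have hx' : x ∈ Set.Icc (0:ℝ) T := ⟨le_trans hT₁0 hx.1, hx.2.le⟩
      have h := (hu₁ x hx').mul (hu₂ x hx')
      have heq : L * u₁ x * (u₁ x^2+u₂ x^2)^α * u₂ x
          + u₁ x * -(L * u₂ x * (u₁ x^2+u₂ x^2)^α) = 0 := by ring
      rw [heq] at h
      exact h.hasDerivWithinAt
  -- the constant ρ
  have hσp : 0 < s₁ (T/2) := hs₁p _ hT₁Icc
  have hσ₂p : 0 < s₂ (T/2) := hs₂p _ hT₁Icc
  have hρpos : 0 < (u₁ (T/2) * u₂ (T/2)) / (s₁ (T/2) * s₂ (T/2)) := by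
    have h1 := hu₁p (T/2) hT₁Icc; have h2 := hu₂p (T/2) hT₁Icc
    positivity
  have hρle : (u₁ (T/2) * u₂ (T/2)) / (s₁ (T/2) * s₂ (T/2)) ≤ 1 + (1 - μ^2) / 60 := by
    have hΔ := hΔpos _ hT₁Icc
    have hcT := hΔctrl _ hT₁Icc
    rw [abs_le] at hcT
    have hu2p' := hu₂p _ hT₁Icc
    have hΔle : u₂ (T/2) - s₂ (T/2) ≤ s₁ (T/2) * ((1-μ)/72) := by
      rw [div_le_iff₀ hσ₂p] at hrT₁
      rw [hs12T₁]
      linarith only [hrT₁]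
    have hu1e : u₁ (T/2) ≤ s₁ (T/2) + μ * (u₂ (T/2) - s₂ (T/2)) := by linarith [hcT.2]
    rw [div_le_iff₀ (by positivity), ← hs12T₁]
    have key := my_rho_bound (s₁ (T/2)) (u₂ (T/2) - s₁ (T/2)) (u₁ (T/2)) (u₂ (T/2)) μ
      hσp (by rw [hs12T₁]; exact hΔ) hu2p' (by ring) hμ0 hμ1
      (by rw [hs12T₁] at hΔle ⊢; exact hΔle)
      (by rw [hs12T₁]; linarith [hu1e, hs12T₁])
    linarith [key]
  -- barrier : u₂/s₂ ≤ 17/16 on [T/2, T]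
  have hbar : ∀ x ∈ Set.Icc (T/2) T, u₂ x / s₂ x ≤ 17/16 := by
    apply my_barrier
      (f' := fun τ => L * (u₂ τ / s₂ τ) * ((s₁ τ ^2+s₂ τ ^2)^α - (u₁ τ ^2+u₂ τ ^2)^α))
    · intro τ hτ; exact hr' τ ⟨le_trans hT₁0 hτ.1, hτ.2⟩
    · linarith [hrT₁]
    · intro x hx hge
      have hx' : x ∈ Set.Icc (0:ℝ) T := ⟨le_trans hT₁0 hx.1, hx.2⟩
      obtain ⟨ha1, ha2, hb1, hb2⟩ := hpos x hx'
      have h21 := horder₂ x hx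
      have hΔ := hΔpos x hx'
      have hc := hΔctrl x hx'
      rw [abs_le] at hc
      set ρ := (u₁ (T/2) * u₂ (T/2)) / (s₁ (T/2) * s₂ (T/2)) with hρ
      have hprod : u₁ x * u₂ x = ρ * (s₁ x * s₂ x) := by
        rw [hconstu x hx, hconsts x hx, hρ]
        field_simp
      have h1716 : (17/16) * s₂ x ≤ u₂ x := by
        rw [le_div_iff₀ ha2] at hge
        linarith
      have hRsRux : s₁ x^2 + s₂ x^2 < u₁ x^2 + u₂ x^2 :=
        my_quad_core (s₁ x) (s₂ x) (u₁ x) (u₂ x) ρ μ ha1 ha2 hb1 hb2 hμ0 hμ1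
          hρpos hρle hprod hΔ (by linarith [hc.1]) h1716
      have hXY : (s₁ x^2+s₂ x^2)^α < (u₁ x^2+u₂ x^2)^α :=
        Real.rpow_lt_rpow (le_of_lt (hRsp x hx')) hRsRux hα0
      have hpos' : 0 < L * (u₂ x / s₂ x) := mul_pos hLpos (div_pos hb2 ha2)
      exact mul_neg_of_pos_of_neg hpos' (by linarith)
  have hr16 : ∀ x ∈ Set.Icc (T/2) T, u₂ x ≤ (17/16) * s₂ x := by
    intro x hx
    have hx' : x ∈ Set.Icc (0:ℝ) T := ⟨le_trans hT₁0 hx.1, hx.2⟩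
    have h := hbar x hx
    rw [div_le_iff₀ (hs₂p x hx')] at h
    linarith
  -- the monotone auxiliary quantity s₁^(-2α) + 2^α C₀ τ on [T/2, T]
  have hG₂deriv : ∀ x ∈ Set.Icc (T/2) T,
      HasDerivAt (fun τ => s₁ τ ^ (-(2*α)) + 2^α * C₀ * τ)
        (L * s₁ x * (s₁ x^2+s₂ x^2)^α * (-(2*α)) * s₁ x ^ (-(2*α)-1) + 2^α*C₀*1) x := by
    intro x hx
    have hx' : x ∈ Set.Icc (0:ℝ) T := ⟨le_trans hT₁0 hx.1, hx.2⟩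
    exact ((hs₁ x hx').rpow_const (Or.inl (ne_of_gt (hs₁p x hx')))).add
      ((hasDerivAt_id x).const_mul (2^α*C₀))
  have hG₂ : MonotoneOn (fun τ => s₁ τ ^ (-(2*α)) + 2^α * C₀ * τ) (Set.Icc (T/2) T) := by
    apply monotoneOn_of_deriv_nonneg (convex_Icc _ _)
    · intro x hx; exact (hG₂deriv x hx).continuousAt.continuousWithinAt
    · intro x hx
      rw [interior_Icc] at hx
      exact (hG₂deriv x ⟨hx.1.le, hx.2.le⟩).differentiableAt.differentiableWithinAt
    · intro x hx
      rw [interior_Icc] at hx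
      have hxI : x ∈ Set.Icc (T/2) T := ⟨hx.1.le, hx.2.le⟩
      have hx' : x ∈ Set.Icc (0:ℝ) T := ⟨le_trans hT₁0 hx.1.le, hx.2.le⟩
      rw [(hG₂deriv x hxI).deriv]
      have h1 := hs₁p x hx'
      have hXle : (s₁ x^2+s₂ x^2)^α ≤ 2^α * s₁ x^(2*α) := by
        have hle : s₁ x^2 + s₂ x^2 ≤ 2*s₁ x^2 := by
          nlinarith [horder₂ x hxI, hs₂p x hx']
        calc (s₁ x^2+s₂ x^2)^α ≤ (2*s₁ x^2)^α :=
              Real.rpow_le_rpow (by positivity) hle hα0.le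
          _ = 2^α * (s₁ x^2)^α := Real.mul_rpow (by norm_num) (sq_nonneg _)
          _ = 2^α * s₁ x^(2*α) := by rw [hpow2 _ h1.le]
      have h3 : s₁ x * s₁ x ^ (-(2*α)-1) = s₁ x ^ (-(2*α)) := by
        have e := Real.rpow_add h1 1 (-(2*α)-1)
        rw [Real.rpow_one] at e
        rw [← e]; congr 1; ring
      have h4 : s₁ x^(2*α) * s₁ x^(-(2*α)) = 1 := by
        have e : 2*α + -(2*α) = 0 := by ring
        rw [← Real.rpow_add h1, e, Real.rpow_zero]
      have hV : 0 < s₁ x ^ (-(2*α)) := Real.rpow_pos_of_pos h1 _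
      have K1 : (s₁ x^2+s₂ x^2)^α * s₁ x^(-(2*α)) ≤ 2^α := by
        calc (s₁ x^2+s₂ x^2)^α * s₁ x^(-(2*α)) ≤ (2^α * s₁ x^(2*α)) * s₁ x^(-(2*α)) :=
              mul_le_mul_of_nonneg_right hXle hV.le
          _ = 2^α * (s₁ x^(2*α) * s₁ x^(-(2*α))) := by ring
          _ = 2^α := by rw [h4]; ring
      have K2 : (2*α*L)*((s₁ x^2+s₂ x^2)^α * s₁ x^(-(2*α))) ≤ (2*α*L)*2^α :=
        mul_le_mul_of_nonneg_left K1 (by positivity)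
      have h3X : (2*α*L)*((s₁ x * s₁ x^(-(2*α)-1)) * (s₁ x^2+s₂ x^2)^α)
          = (2*α*L)*(s₁ x^(-(2*α)) * (s₁ x^2+s₂ x^2)^α) := by rw [h3]
      rw [hC₀]
      linarith [K2, h3X]
  -- main antitone quantity
  set A := 2 ^ α * C₀ * s₁ b ^ (2 * α) with hA
  set β := (1 - μ) / 2 ^ (α + 2) with hβ
  have hs₁bpos := hs₁p b hbIcc
  have hfbpos : 0 < s₁ b ^ (2*α) := Real.rpow_pos_of_pos hs₁bpos _
  have hApos : 0 < A := by rw [hA]; positivity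
  have hβpos : 0 < β := by
    rw [hβ]
    exact div_pos (by linarith) (Real.rpow_pos_of_pos (by norm_num) _)
  have hβC : β * (2^α * C₀) = (1-μ)*α*L/2 := by
    rw [hβ, hC₀]
    have h2 : (2:ℝ)^(α+2) = 2^α*4 := by
      rw [Real.rpow_add (by norm_num : (0:ℝ) < 2)]
      rw [show (2:ℝ) ^ (2:ℝ) = 4 from by
        rw [show (2:ℝ) = ((2:ℕ):ℝ) from by norm_num, Real.rpow_natCast]; norm_num]
    rw [h2]
    have : (2:ℝ)^α ≠ 0 := ne_of_gt h2αpos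
    field_simp
    ring
  have hNpos : ∀ x ∈ Set.Icc (T/2) b, 0 < 1 + A*(b-x) := by
    intro x hx
    have := mul_nonneg hApos.le (sub_nonneg.mpr hx.2)
    linarith only [this]
  have hHd : ∀ x ∈ Set.Icc (T/2) b, HasDerivAt
      (fun τ => (u₂ τ - s₂ τ)/s₁ τ * (1 + A*(b-τ))^(-β))
      ( ((-(L*u₂ x*(u₁ x^2+u₂ x^2)^α) - -(L*s₂ x*(s₁ x^2+s₂ x^2)^α)) * s₁ x
          - (u₂ x - s₂ x) * (L*s₁ x*(s₁ x^2+s₂ x^2)^α)) / (s₁ x)^2 * (1 + A*(b-x))^(-β)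
        + (u₂ x - s₂ x)/s₁ x * ((A * -1) * (-β) * (1 + A*(b-x))^(-β-1)) ) x := by
    intro x hx
    have hx' : x ∈ Set.Icc (0:ℝ) T := ⟨le_trans hT₁0 hx.1, le_trans hx.2 hbT⟩
    have hN' : HasDerivAt (fun τ => 1 + A*(b-τ)) (A * -1) x := by
      have h0 : HasDerivAt (fun τ : ℝ => b - τ) (-1) x := by
        simpa using (hasDerivAt_id x).const_sub b
      exact (h0.const_mul A).const_add 1
    exact (((hu₂ x hx').sub (hs₂ x hx')).div (hs₁ x hx') (ne_of_gt (hs₁p x hx'))).mul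
      (hN'.rpow_const (Or.inl (ne_of_gt (hNpos x hx))))
  have hanti : AntitoneOn (fun τ => (u₂ τ - s₂ τ)/s₁ τ * (1 + A*(b-τ))^(-β))
      (Set.Icc (T/2) b) := by
    apply antitoneOn_of_deriv_nonpos (convex_Icc _ _)
    · intro x hx; exact (hHd x hx).continuousAt.continuousWithinAt
    · intro x hx
      rw [interior_Icc] at hx
      exact (hHd x ⟨hx.1.le, hx.2.le⟩).differentiableAt.differentiableWithinAt
    · intro x hx
      rw [interior_Icc] at hx
      have hxIb : x ∈ Set.Icc (T/2) b := ⟨hx.1.le, hx.2.le⟩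
      have hxIT : x ∈ Set.Icc (T/2) T := ⟨hx.1.le, le_trans hx.2.le hbT⟩
      have hx' : x ∈ Set.Icc (0:ℝ) T := ⟨le_trans hT₁0 hx.1.le, le_trans hx.2.le hbT⟩
      rw [(hHd x hxIb).deriv]
      obtain ⟨ha1, ha2, hb1, hb2⟩ := hpos x hx'
      have hnpos : 0 < 1 + A*(b-x) := hNpos x hxIb
      have hΔ := hΔpos x hx'
      have hXpos : 0 < (s₁ x^2+s₂ x^2)^α := Real.rpow_pos_of_pos (hRsp x hx') _
      have hepos : 0 < (1 + A*(b-x))^(-β-1) := Real.rpow_pos_of_pos hnpos _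
      -- Subkey1
      have hSK1 : u₂ x * ((s₁ x^2+s₂ x^2)^α - (u₁ x^2+u₂ x^2)^α)
          ≤ (3/2) * ((s₁ x^2+s₂ x^2)^α) * (u₂ x - s₂ x) :=
        my_iv (s₁ x) (s₂ x) (u₁ x) (u₂ x) μ α ha1 ha2 hb1 hb2 hμ0 hμ1 hα0 hα1
          (horder₂ x hxIT) hΔ (hr16 x hxIT) (hΔctrl x hx')
      -- Subkey2
      have hSK2 : A * β ≤ L/2 * ((s₁ x^2+s₂ x^2)^α * (1 + A*(b-x))) := by
        have hfxpos : 0 < s₁ x ^ (2*α) := Real.rpow_pos_of_pos ha1 _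
        have hmono := hG₂ hxIT ⟨hT₁b, hbT⟩ (le_trans hx.2.le (le_refl b))
        simp only at hmono
        have hneg1 : s₁ x ^ (-(2*α)) = (s₁ x ^ (2*α))⁻¹ := by
          rw [Real.rpow_neg ha1.le]
        have hneg2 : s₁ b ^ (-(2*α)) = (s₁ b ^ (2*α))⁻¹ := by
          rw [Real.rpow_neg hs₁bpos.le]
        rw [hneg1, hneg2] at hmono
        have hineq : (s₁ x ^ (2*α))⁻¹ ≤ (s₁ b ^ (2*α))⁻¹ + 2^α*C₀*(b-x) := by
          linarith only [hmono]
        have hfb0 := my_fbn (s₁ x ^ (2*α)) (s₁ b ^ (2*α)) (2^α*C₀) (b-x)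
          hfxpos hfbpos hineq
        have hfb : s₁ b ^ (2*α) ≤ s₁ x ^ (2*α) * (1 + A*(b-x)) := by
          rw [hA]; linarith only [hfb0]
        have hAleq : A * β ≤ β * (2^α * C₀) * (s₁ x ^ (2*α) * (1 + A*(b-x))) := by
          calc A * β = β * (2^α*C₀) * (s₁ b ^ (2*α)) := by rw [hA]; ring
            _ ≤ β * (2^α*C₀) * (s₁ x ^ (2*α) * (1 + A*(b-x))) := by
                apply mul_le_mul_of_nonneg_left hfb
                positivity
        rw [hβC] at hAleq
        have hfxX : s₁ x ^ (2*α) ≤ (s₁ x^2+s₂ x^2)^α := by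
          rw [← hpow2 _ ha1.le]
          apply Real.rpow_le_rpow (sq_nonneg _) _ hα0.le
          have := sq_nonneg (s₂ x)
          linarith only [this]
        have hfinal : (1-μ)*α*L/2 * (s₁ x ^ (2*α) * (1 + A*(b-x)))
            ≤ L/2 * ((s₁ x^2+s₂ x^2)^α * (1 + A*(b-x))) := by
          have hc1 : (1-μ)*α*L/2 ≤ L/2 := by
            have h1 : (1-μ)*α ≤ 1*1 :=
              mul_le_mul (by linarith only [hμ0]) (by linarith only [hα1])
                hα0.le (by norm_num)
            have h2 := mul_le_mul_of_nonneg_right (by linarith only [h1] : (1-μ)*α ≤ 1)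
              hLpos.le
            linarith only [h2]
          have hc2 : s₁ x ^ (2*α) * (1 + A*(b-x)) ≤ (s₁ x^2+s₂ x^2)^α * (1 + A*(b-x)) :=
            mul_le_mul_of_nonneg_right hfxX hnpos.le
          have hcc := mul_le_mul hc1 hc2 (by positivity) (by positivity)
          linarith only [hcc]
        linarith only [hAleq, hfinal]
      -- core inequality
      have hkey : (u₂ x - s₂ x)*(A*β)
          ≤ L*(1 + A*(b-x))*(2*(u₂ x - s₂ x)*((s₁ x^2+s₂ x^2)^α)
              + u₂ x*((u₁ x^2+u₂ x^2)^α - (s₁ x^2+s₂ x^2)^α)) := by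
        have k1 : (1/2)*((u₂ x - s₂ x)*((s₁ x^2+s₂ x^2)^α))
            ≤ 2*(u₂ x - s₂ x)*((s₁ x^2+s₂ x^2)^α)
              + u₂ x*((u₁ x^2+u₂ x^2)^α - (s₁ x^2+s₂ x^2)^α) := by
          linarith only [hSK1]
        have k2 := mul_le_mul_of_nonneg_left k1
          (by positivity : (0:ℝ) ≤ L*(1 + A*(b-x)))
        have k3 := mul_le_mul_of_nonneg_left hSK2 hΔ.le
        linarith only [k2, k3]
      -- reduction of the derivative expression
      have hsplit : (1 + A*(b-x))^(-β) = (1 + A*(b-x))^(-β-1) * (1 + A*(b-x)) := by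
        have h := Real.rpow_add hnpos (-β-1) 1
        rw [Real.rpow_one] at h
        rw [← h]; congr 1; ring
      have hiden : ((-(L*u₂ x*(u₁ x^2+u₂ x^2)^α) - -(L*s₂ x*(s₁ x^2+s₂ x^2)^α)) * s₁ x
            - (u₂ x - s₂ x) * (L*s₁ x*(s₁ x^2+s₂ x^2)^α)) / (s₁ x)^2
              * (1 + A*(b-x))^(-β)
          + (u₂ x - s₂ x)/s₁ x * ((A * -1) * (-β) * (1 + A*(b-x))^(-β-1))
          = ((1 + A*(b-x))^(-β-1)/s₁ x)
            * ((u₂ x - s₂ x)*(A*β)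
              - L*(1 + A*(b-x))*(2*(u₂ x - s₂ x)*((s₁ x^2+s₂ x^2)^α)
                + u₂ x*((u₁ x^2+u₂ x^2)^α - (s₁ x^2+s₂ x^2)^α))) := by
        rw [hsplit]
        field_simp
        ring
      rw [hiden]
      apply mul_nonpos_iff.mpr
      exact Or.inl ⟨by positivity, by linarith only [hkey]⟩
  -- apply antitonicity between T/2 and t
  have hmain := hanti (Set.left_mem_Icc.mpr hT₁b) (⟨ht₁, htb⟩ : t ∈ Set.Icc (T/2) b) ht₁
  have hNt : 0 < 1 + A*(b-t) := hNpos t ⟨ht₁, htb⟩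
  have hNT₁ : 0 < 1 + A*(b-T/2) := hNpos (T/2) (Set.left_mem_Icc.mpr hT₁b)
  have hs₁t : 0 < s₁ t := hs₁p t htIcc
  have hΔT₁ : 0 < u₂ (T/2) - s₂ (T/2) := hΔpos _ hT₁Icc
  have hrn1 : (1 + A*(b-t)) ^ (-β) = ((1 + A*(b-t))^β)⁻¹ := by rw [Real.rpow_neg hNt.le]
  have hrn2 : (1 + A*(b-T/2)) ^ (-β) = ((1 + A*(b-T/2))^β)⁻¹ := by
    rw [Real.rpow_neg hNT₁.le]
  simp only at hmain
  rw [hrn1, hrn2] at hmain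
  have hP1 : 0 < (1 + A*(b-t))^β := Real.rpow_pos_of_pos hNt β
  have hP2 : 0 < (1 + A*(b-T/2))^β := Real.rpow_pos_of_pos hNT₁ β
  have hmul := mul_le_mul_of_nonneg_right hmain
    (by positivity : (0:ℝ) ≤ s₁ t * (1 + A*(b-t))^β)
  have hL1 : (u₂ t - s₂ t)/s₁ t * ((1 + A*(b-t))^β)⁻¹ * (s₁ t * (1 + A*(b-t))^β)
      = u₂ t - s₂ t := by
    field_simp
  have hL2 : (u₂ (T/2) - s₂ (T/2))/s₁ (T/2) * ((1 + A*(b-T/2))^β)⁻¹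
        * (s₁ t * (1 + A*(b-t))^β)
      = ((u₂ (T/2) - s₂ (T/2))/s₁ (T/2)) * s₁ t
        * ((1 + A*(b-t))/(1 + A*(b-T/2)))^β := by
    rw [Real.div_rpow hNt.le hNT₁.le]
    field_simp
  rw [hL1, hL2] at hmul
  exact hmul
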